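/- Let P be a right LCM monoid and S the associated semigroup of classes [p,q] together with 0. Then S is an inverse semigroup: every element has a unique generalized inverse, with [p,q]* = [q,p], and idempotents commute. -/

import Mathlib

/-- The principal right ideal `pP` of a monoid. -/
def rI {M : Type*} [Monoid M] (p : M) : Set M := {x | ∃ y, x = p * y}

/-- A right LCM monoid: left cancellative, and any two principal right ideals are
either disjoint or intersect in another principal right ideal. -/
class RightLCM (M : Type*) extends Monoid M where
  mul_left_cancel' : ∀ a b c : M, a * b = a * c → b = c
  lcm : ∀ p q : M, rI p ∩ rI q = ∅ ∨ ∃ r : M, rI p ∩ rI q = rI r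

namespace RightLCM

variable {M : Type*} [RightLCM M]

/-- The equivalence relation `(p,q) ∼ (pu,qu)` for units `u`. -/
def peq (x y : M × M) : Prop := ∃ u : M, IsUnit u ∧ x.1 = y.1 * u ∧ x.2 = y.2 * u

theorem peq_equivalence : Equivalence (peq (M := M)) := by
  constructor
  · intro x; exact ⟨1, isUnit_one, by simp, by simp⟩
  · rintro x y ⟨u, hu, h1, h2⟩
    obtain ⟨w, hw⟩ := hu
    subst hw
    exact ⟨↑w⁻¹, Units.isUnit _, by rw [h1, mul_assoc, w.mul_inv, mul_one],
      by rw [h2, mul_assoc, w.mul_inv, mul_one]⟩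
  · rintro x y z ⟨u, hu, h1, h2⟩ ⟨v, hv, h3, h4⟩
    exact ⟨v * u, hv.mul hu, by rw [h1, h3, mul_assoc], by rw [h2, h4, mul_assoc]⟩

instance pSetoid : Setoid (M × M) := ⟨peq, peq_equivalence⟩

/-- The inverse semigroup `S = {[p,q] : p,q ∈ P} ∪ {0}` associated to a right LCM monoid. -/
abbrev S (M : Type*) [RightLCM M] := WithZero (Quotient (pSetoid (M := M)))

/-- The class `[p,q]` as an element of `S M`. -/
def cls (p q : M) : S M := (Quotient.mk (pSetoid (M := M)) (p, q) : Quotient (pSetoid (M := M)))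

open scoped Classical in
/-- Product of two representatives: `[a,b][c,d] = [ab', dc']` when `bP ∩ cP = rP` with
`bb' = cc' = r`, and `0` when `bP ∩ cP = ∅`. -/
noncomputable def mulPair (x y : M × M) : S M :=
  if h : rI x.2 ∩ rI y.1 = ∅ then 0
  else
    have hr := (RightLCM.lcm x.2 y.1).resolve_left h
    have hmem : Classical.choose hr ∈ rI x.2 ∩ rI y.1 :=
      (Set.ext_iff.mp (Classical.choose_spec hr) _).mpr ⟨1, (mul_one _).symm⟩
    cls (x.1 * Classical.choose hmem.1) (y.2 * Classical.choose hmem.2)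

/-- The multiplication on `S M` (with `0` absorbing). -/
noncomputable def smul : S M → S M → S M
  | none, _ => 0
  | some _, none => 0
  | some a, some b => mulPair a.out b.out

/-- The involution `[p,q]* = [q,p]` on `S M`. -/
noncomputable def star : S M → S M
  | none => 0
  | some a => cls a.out.2 a.out.1

end RightLCM

namespace RightLCM

variable {M : Type*} [RightLCM M]

theorem mlc {a b c : M} (h : a * b = a * c) : b = c := RightLCM.mul_left_cancel' a b c h

theorem mem_rI_self (p : M) : p ∈ rI p := ⟨1, (mul_one p).symm⟩

theorem unit_mul_inv_mul (w : Mˣ) (a b : M) : a * ↑w * ((↑w⁻¹ : M) * b) = a * b := by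
  rw [mul_assoc, ← mul_assoc (↑w : M), w.mul_inv, one_mul]

theorem rI_mul_unit {p u : M} (hu : IsUnit u) : rI (p * u) = rI p := by
  obtain ⟨w, rfl⟩ := hu
  ext x
  constructor
  · rintro ⟨y, rfl⟩; exact ⟨(w : M) * y, by rw [mul_assoc]⟩
  · rintro ⟨y, rfl⟩
    exact ⟨(↑w⁻¹ : M) * y, (unit_mul_inv_mul w p y).symm⟩

theorem rI_eq_unit {a b : M} (h : rI a = rI b) : ∃ u : M, IsUnit u ∧ a = b * u := by
  obtain ⟨s, hs⟩ : a ∈ rI b := h ▸ mem_rI_self a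
  obtain ⟨t, ht⟩ : b ∈ rI a := h.symm ▸ mem_rI_self b
  have hst : s * t = 1 := mlc (a := b) (by rw [← mul_assoc, ← hs, ← ht, mul_one])
  have hts : t * s = 1 := mlc (a := a) (by rw [← mul_assoc, ← ht, ← hs, mul_one])
  exact ⟨s, ⟨⟨s, t, hst, hts⟩, rfl⟩, hs⟩

theorem cls_mul_unit {a b u : M} (hu : IsUnit u) : cls (a * u) (b * u) = cls a b := by
  unfold cls
  exact congrArg _ (Quotient.sound ⟨u, hu, rfl, rfl⟩)

theorem cls_eq_iff {a b c d : M} :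
    cls a b = cls c d ↔ ∃ u : M, IsUnit u ∧ a = c * u ∧ b = d * u := by
  constructor
  · intro h
    have : (Quotient.mk (pSetoid (M := M)) (a, b)) = Quotient.mk _ (c, d) :=
      Option.some_injective _ h
    exact Quotient.exact this
  · rintro ⟨u, hu, rfl, rfl⟩; exact cls_mul_unit hu

theorem cls_ne_zero (a b : M) : cls a b ≠ 0 := fun h => Option.some_ne_none _ h

theorem mulPair_eq_zero {x y : M × M} (h : rI x.2 ∩ rI y.1 = ∅) : mulPair x y = 0 := by
  rw [mulPair, dif_pos h]

theorem mulPair_eq {x y : M × M} {r b' c' : M}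
    (hr : rI x.2 ∩ rI y.1 = rI r) (hb : x.2 * b' = r) (hc : y.1 * c' = r) :
    mulPair x y = cls (x.1 * b') (y.2 * c') := by
  have hne : rI x.2 ∩ rI y.1 ≠ ∅ := by
    rw [hr]; intro h; exact absurd (h ▸ mem_rI_self r) (Set.notMem_empty r)
  rw [mulPair, dif_neg hne]
  generalize_proofs h1 h2 h3 h4
  show cls (x.1 * Classical.choose (h3 h1 (h2 h1))) (y.2 * Classical.choose (h4 h1 (h2 h1))) =
    cls (x.1 * b') (y.2 * c')
  have hr₀ : rI x.2 ∩ rI y.1 = rI (Classical.choose h1) := Classical.choose_spec h1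
  have hb₀ := Classical.choose_spec (h3 h1 (h2 h1))
  have hc₀ := Classical.choose_spec (h4 h1 (h2 h1))
  obtain ⟨u, hu, hru⟩ := rI_eq_unit (hr ▸ hr₀ : rI r = rI (Classical.choose h1)).symm
  have hbu : Classical.choose (h3 h1 (h2 h1)) = b' * u := by
    refine mlc (a := x.2) ?_
    rw [← hb₀, hru, ← hb, mul_assoc]
  have hcu : Classical.choose (h4 h1 (h2 h1)) = c' * u := by
    refine mlc (a := y.1) ?_
    rw [← hc₀, hru, ← hc, mul_assoc]
  rw [hbu, hcu, ← mul_assoc, ← mul_assoc, cls_mul_unit hu]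

theorem exists_witness {b c r : M} (hr : rI b ∩ rI c = rI r) :
    ∃ b' c', b * b' = r ∧ c * c' = r := by
  obtain ⟨⟨b', hb⟩, ⟨c', hc⟩⟩ : r ∈ rI b ∩ rI c := hr.symm ▸ mem_rI_self r
  exact ⟨b', c', hb.symm, hc.symm⟩

theorem mulPair_congr {x x' y y' : M × M} (hx : peq x x') (hy : peq y y') :
    mulPair x y = mulPair x' y' := by
  obtain ⟨u, hu, hx1, hx2⟩ := hx
  obtain ⟨v, hv, hy1, hy2⟩ := hy
  have h2 : rI x.2 = rI x'.2 := hx2 ▸ rI_mul_unit hu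
  have h1 : rI y.1 = rI y'.1 := hy1 ▸ rI_mul_unit hv
  by_cases h : rI x'.2 ∩ rI y'.1 = ∅
  · rw [mulPair_eq_zero (by rw [h2, h1, h]), mulPair_eq_zero h]
  · obtain ⟨r, hr⟩ := (RightLCM.lcm x'.2 y'.1).resolve_left h
    obtain ⟨b', c', hb, hc⟩ := exists_witness hr
    obtain ⟨wu, rfl⟩ := hu
    obtain ⟨wv, rfl⟩ := hv
    rw [mulPair_eq (x := x) (y := y) (r := r) (b' := (↑wu⁻¹ : M) * b') (c' := (↑wv⁻¹ : M) * c')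
          (by rw [h2, h1, hr]) (by rw [hx2, unit_mul_inv_mul, hb])
          (by rw [hy1, unit_mul_inv_mul, hc]),
        mulPair_eq hr hb hc, hx1, hy2, unit_mul_inv_mul, unit_mul_inv_mul]

theorem smul_cls (a b c d : M) : smul (cls a b) (cls c d) = mulPair (a, b) (c, d) := by
  show mulPair (Quotient.mk _ (a, b)).out (Quotient.mk _ (c, d)).out = _
  exact mulPair_congr (Quotient.mk_out (s := pSetoid) _) (Quotient.mk_out (s := pSetoid) _)

theorem smul_zero_left (s : S M) : smul 0 s = 0 := rfl

theorem smul_zero_right (s : S M) : smul s 0 = 0 := by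
  rcases s with _ | a <;> rfl

theorem eq_cls (a : Quotient (pSetoid (M := M))) : (a : S M) = cls a.out.1 a.out.2 := by
  unfold cls
  rw [Prod.mk.eta, Quotient.out_eq]

theorem smul_cls_cls (p q r : M) : smul (cls p q) (cls q r) = cls p r := by
  rw [smul_cls, mulPair_eq (r := q) (b' := 1) (c' := 1) (Set.inter_self _) (mul_one q) (mul_one q),
    mul_one, mul_one]

end RightLCM

namespace RightLCM

variable {M : Type*} [RightLCM M]

theorem unique_inv {p q c d : M}
    (h1 : smul (smul (cls p q) (cls c d)) (cls p q) = cls p q)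
    (h2 : smul (smul (cls c d) (cls p q)) (cls c d) = cls c d) :
    cls c d = cls q p := by
  rw [smul_cls] at h1 h2
  -- Step 1 : rI q ∩ rI c ≠ ∅
  by_cases hqc : rI q ∩ rI c = ∅
  · rw [mulPair_eq_zero hqc, smul_zero_left] at h1
    exact absurd h1.symm (cls_ne_zero p q)
  obtain ⟨r, hr⟩ := (RightLCM.lcm q c).resolve_left hqc
  obtain ⟨b', c', hb', hc'⟩ := exists_witness hr
  rw [mulPair_eq hr hb' hc', smul_cls] at h1
  -- Step 2 : (st)s
  by_cases hdp : rI (d * c') ∩ rI p = ∅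
  · rw [mulPair_eq_zero hdp] at h1
    exact absurd h1.symm (cls_ne_zero p q)
  obtain ⟨r₂, hr₂⟩ := (RightLCM.lcm (d * c') p).resolve_left hdp
  obtain ⟨e, f, he, hf⟩ := exists_witness hr₂
  rw [mulPair_eq hr₂ he hf] at h1
  replace h1 : cls (p * b' * e) (q * f) = cls p q := h1
  obtain ⟨u, hu, hpu, hqu⟩ := cls_eq_iff.mp h1
  have hbe : b' * e = u := mlc (a := p) (by rw [← mul_assoc, hpu])
  have hfu : f = u := mlc (a := q) hqu
  -- Step 3 : rI d ∩ rI p ≠ ∅, since r₂ is in it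
  have hr₂mem : r₂ ∈ rI d ∩ rI p :=
    ⟨⟨c' * e, by rw [← he, mul_assoc]⟩, ⟨f, hf.symm⟩⟩
  have hdp' : rI d ∩ rI p ≠ ∅ := fun h =>
    Set.eq_empty_iff_forall_notMem.mp h r₂ hr₂mem
  obtain ⟨r₃, hr₃⟩ := (RightLCM.lcm d p).resolve_left hdp'
  obtain ⟨d₁, p₁, hd₁, hp₁⟩ := exists_witness hr₃
  rw [mulPair_eq hr₃ hd₁ hp₁, smul_cls] at h2
  -- Step 4 : (ts)t
  by_cases hqpc : rI (q * p₁) ∩ rI c = ∅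
  · rw [mulPair_eq_zero hqpc] at h2
    exact absurd h2.symm (cls_ne_zero c d)
  obtain ⟨r₄, hr₄⟩ := (RightLCM.lcm (q * p₁) c).resolve_left hqpc
  obtain ⟨g, h, hg, hh⟩ := exists_witness hr₄
  rw [mulPair_eq hr₄ hg hh] at h2
  replace h2 : cls (c * d₁ * g) (d * h) = cls c d := h2
  obtain ⟨v, hv, hcv, hdv⟩ := cls_eq_iff.mp h2
  have hdg : d₁ * g = v := mlc (a := c) (by rw [← mul_assoc, hcv])
  have hhv : h = v := mlc (a := d) hdv
  -- Step 5 : p * u ∈ rI r₃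
  obtain ⟨z, hz⟩ : p * u ∈ rI r₃ := by
    rw [← hr₃]
    exact ⟨⟨c' * e, by rw [← mul_assoc, he, ← hf, hfu]⟩, ⟨u, rfl⟩⟩
  have huz : u = p₁ * z := mlc (a := p) (by rw [hz, ← hp₁, mul_assoc])
  have hcez : c' * e = d₁ * z :=
    mlc (a := d) (by rw [← mul_assoc, he, ← hf, hfu, hz, ← hd₁, mul_assoc])
  -- Step 6 : c * v ∈ rI r
  obtain ⟨w, hw⟩ : c * v ∈ rI r := by
    rw [← hr]
    exact ⟨⟨p₁ * g, by rw [← mul_assoc, hg, ← hh, hhv]⟩, ⟨v, rfl⟩⟩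
  have hvw : v = c' * w := mlc (a := c) (by rw [hw, ← hc', mul_assoc])
  have hpg : p₁ * g = b' * w :=
    mlc (a := q) (by rw [← mul_assoc, hg, ← hh, hhv, hw, ← hb', mul_assoc])
  -- units u, v as Units
  obtain ⟨wu, rfl⟩ := hu
  obtain ⟨wv, rfl⟩ := hv
  -- Step 7 : q = c * m, c = q * n, with n m = m n = 1
  obtain ⟨_, ⟨m, hm⟩⟩ : q ∈ rI q ∩ rI c := by
    rw [hr]
    exact ⟨e * ↑wu⁻¹, by rw [← hb', mul_assoc, ← mul_assoc b', hbe, wu.mul_inv, mul_one]⟩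
  obtain ⟨⟨n, hn⟩, _⟩ : c ∈ rI q ∩ rI c := by
    rw [hr]
    exact ⟨w * ↑wv⁻¹, by rw [← hc', mul_assoc, ← mul_assoc c', ← hvw, wv.mul_inv, mul_one]⟩
  have hnm : n * m = 1 := mlc (a := q) (by rw [← mul_assoc, ← hn, ← hm, mul_one])
  have hmn : m * n = 1 := mlc (a := c) (by rw [← mul_assoc, ← hm, ← hn, mul_one])
  -- Step 8 : p = d * l, d = p * k, with k l = l k = 1
  obtain ⟨⟨l, hl⟩, _⟩ : p ∈ rI d ∩ rI p := by
    rw [hr₃]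
    exact ⟨z * ↑wu⁻¹, by rw [← hp₁, mul_assoc, ← mul_assoc p₁, ← huz, wu.mul_inv, mul_one]⟩
  obtain ⟨_, ⟨k, hk⟩⟩ : d ∈ rI d ∩ rI p := by
    rw [hr₃]
    exact ⟨g * ↑wv⁻¹, by rw [← hd₁, mul_assoc, ← mul_assoc d₁, hdg, wv.mul_inv, mul_one]⟩
  have hkl : k * l = 1 := mlc (a := p) (by rw [← mul_assoc, ← hk, ← hl, mul_one])
  have hlk : l * k = 1 := mlc (a := d) (by rw [← mul_assoc, ← hl, ← hk, mul_one])
  -- Step 9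
  have hb'n : b' = n * c' := mlc (a := q) (by rw [hb', ← mul_assoc, ← hn, hc'])
  have hp₁k : p₁ = k * d₁ := mlc (a := p) (by rw [hp₁, ← mul_assoc, ← hk, hd₁])
  -- Step 10 : n = k
  have hukd : (↑wu : M) = k * (d₁ * z) := by rw [huz, hp₁k, mul_assoc]
  have hund : (↑wu : M) = n * (d₁ * z) := by
    rw [← hbe, hb'n, mul_assoc, hcez]
  have hdzl : l * ↑wu = d₁ * z := by
    have := congrArg (fun x => l * x) hukd
    simpa [← mul_assoc, hlk] using this
  have hnl : n * l = 1 := by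
    have h5 : n * l * ↑wu = ↑wu := by rw [mul_assoc, hdzl, ← hund]
    have := congrArg (fun x => x * (↑wu⁻¹ : M)) h5
    simpa [mul_assoc, wu.mul_inv] using this
  have hnk : n = k := by rw [← mul_one n, ← hlk, ← mul_assoc, hnl, one_mul]
  exact cls_eq_iff.mpr ⟨n, ⟨⟨n, m, hnm, hmn⟩, rfl⟩, hn, by rw [hk, hnk]⟩

end RightLCM

namespace RightLCM

variable {M : Type*} [RightLCM M]

theorem idem_cls {p q : M} (h : smul (cls p q) (cls p q) = cls p q) : q = p := by
  rw [smul_cls] at h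
  by_cases hqp : rI q ∩ rI p = ∅
  · rw [mulPair_eq_zero hqp] at h; exact absurd h.symm (cls_ne_zero p q)
  obtain ⟨r, hr⟩ := (RightLCM.lcm q p).resolve_left hqp
  obtain ⟨b', c', hb', hc'⟩ := exists_witness hr
  rw [mulPair_eq hr hb' hc'] at h
  replace h : cls (p * b') (q * c') = cls p q := h
  obtain ⟨u, hu, hpu, hqu⟩ := cls_eq_iff.mp h
  have hbu : b' = u := mlc hpu
  have hcu : c' = u := mlc hqu
  obtain ⟨w, rfl⟩ := hu
  rw [hbu] at hb'
  rw [hcu] at hc'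
  have hqp' : q * ↑w = p * ↑w := by rw [hb', hc']
  have := congrArg (fun x => x * (↑w⁻¹ : M)) hqp'
  simpa [mul_assoc, w.mul_inv] using this

theorem idem_comm (p q : M) : smul (cls p p) (cls q q) = smul (cls q q) (cls p p) := by
  rw [smul_cls, smul_cls]
  by_cases h : rI p ∩ rI q = ∅
  · rw [mulPair_eq_zero h, mulPair_eq_zero (show rI q ∩ rI p = ∅ by rwa [Set.inter_comm])]
  obtain ⟨r, hr⟩ := (RightLCM.lcm p q).resolve_left h
  obtain ⟨p', q', hp, hq⟩ := exists_witness hr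
  rw [mulPair_eq hr hp hq,
    mulPair_eq (show rI q ∩ rI p = rI r by rwa [Set.inter_comm]) hq hp, hp, hq]

end RightLCM

open RightLCM in
/-- `S` is an inverse semigroup: every element has a unique generalized inverse,
the inverse of `[p,q]` is `[q,p]`, and idempotents commute. -/
theorem stmt5 {M : Type*} [RightLCM M] :
    (∀ s : S M, ∃! t : S M, smul (smul s t) s = s ∧ smul (smul t s) t = t) ∧
    (∀ p q : M, smul (smul (cls p q) (cls q p)) (cls p q) = cls p q ∧
      smul (smul (cls q p) (cls p q)) (cls q p) = cls q p) ∧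
    (∀ e f : S M, smul e e = e → smul f f = f → smul e f = smul f e) := by
  refine ⟨?_, ?_, ?_⟩
  · intro s
    rcases s with _ | a
    · refine ⟨0, ⟨rfl, rfl⟩, ?_⟩
      rintro t ⟨-, h2⟩
      replace h2 : smul (smul t 0) t = t := h2
      rw [smul_zero_right, smul_zero_left] at h2
      exact h2.symm
    · have ha : (Option.some a : S M) = cls a.out.1 a.out.2 := eq_cls a
      rw [ha]
      refine ⟨cls a.out.2 a.out.1, ⟨?_, ?_⟩, ?_⟩
      · rw [smul_cls_cls, smul_cls_cls]
      · rw [smul_cls_cls, smul_cls_cls]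
      · rintro t ⟨h1, h2⟩
        rcases t with _ | b
        · replace h1 : smul (smul (cls a.out.1 a.out.2) 0) (cls a.out.1 a.out.2) =
              cls a.out.1 a.out.2 := h1
          rw [smul_zero_right, smul_zero_left] at h1
          exact absurd h1.symm (cls_ne_zero _ _)
        · have hb : (Option.some b : S M) = cls b.out.1 b.out.2 := eq_cls b
          rw [hb] at h1 h2 ⊢
          exact unique_inv h1 h2
  · intro p q
    constructor <;> rw [smul_cls_cls, smul_cls_cls]
  · intro e f he hf
    rcases e with _ | a
    · exact (smul_zero_left f).trans (smul_zero_right f).symm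
    rcases f with _ | b
    · exact (smul_zero_right _).trans (smul_zero_left _).symm
    have ha : (Option.some a : S M) = cls a.out.1 a.out.2 := eq_cls a
    have hb : (Option.some b : S M) = cls b.out.1 b.out.2 := eq_cls b
    rw [ha] at he ⊢
    rw [hb] at hf ⊢
    rw [idem_cls he, idem_cls hf]
    exact idem_comm _ _
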